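/- Let n = 2^s with n ≥ 8, ζ = ζ_n, and R⁺_n = ℤ[ζ + ζ⁻¹, 1/2]. Then the unit (1+ζ)(1+ζ⁻¹) = 2 + ζ + ζ⁻¹ of R⁺_n is not a square in the unit group of R⁺_n. -/

import Mathlib

open Polynomial IntermediateField Module

/-- Degree over `ℚ` of the field generated by a primitive `k`-th root of unity. -/
lemma finrank_adjoin_primitive_root {K : Type*} [Field K] [CharZero K] [inst : Algebra ℚ K]
    {x : K} {k : ℕ}
    (hk : 0 < k) (hx : IsPrimitiveRoot x k) :
    Module.finrank ℚ (ℚ⟮x⟯ : IntermediateField ℚ K) = Nat.totient k := by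
  have e : inst = DivisionRing.toRatAlgebra := Subsingleton.elim _ _
  subst e
  have hint : IsIntegral ℚ x := (hx.isIntegral hk).tower_top
  rw [IntermediateField.adjoin.finrank hint, ← Polynomial.cyclotomic_eq_minpoly_rat hx hk,
    Polynomial.natDegree_cyclotomic]

set_option maxHeartbeats 2000000 in
set_option synthInstance.maxHeartbeats 400000 in
/-- For `n = 2^s ≥ 8`: the unit `(1+ζ)(1+ζ⁻¹) = 2 + ζ + ζ⁻¹` of
`R⁺ = ℤ[ζ + ζ⁻¹, 1/2]` is not the square of a unit of `R⁺`. -/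
theorem unit_not_square_two_power (s n : ℕ) (hn : n = 2 ^ s) (hn8 : 8 ≤ n)
    (ζ : ℂ) (hζ : IsPrimitiveRoot ζ n) :
    (1 + ζ) * (1 + ζ⁻¹) = 2 + ζ + ζ⁻¹ ∧
    (1 + ζ) * (1 + ζ⁻¹) ∈ Algebra.adjoin ℤ ({ζ + ζ⁻¹, 2⁻¹} : Set ℂ) ∧
    ((1 + ζ) * (1 + ζ⁻¹))⁻¹ ∈ Algebra.adjoin ℤ ({ζ + ζ⁻¹, 2⁻¹} : Set ℂ) ∧
    ¬ ∃ w : ℂ, w ∈ Algebra.adjoin ℤ ({ζ + ζ⁻¹, 2⁻¹} : Set ℂ) ∧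
      w⁻¹ ∈ Algebra.adjoin ℤ ({ζ + ζ⁻¹, 2⁻¹} : Set ℂ) ∧
      w ^ 2 = (1 + ζ) * (1 + ζ⁻¹) := by
  have hs : 3 ≤ s := by
    by_contra h
    push_neg at h
    interval_cases s <;> omega
  have hn0 : 0 < n := by omega
  have hζn : ζ ^ n = 1 := hζ.pow_eq_one
  have hζ0 : ζ ≠ 0 := fun h => by simp [h, zero_pow (show n ≠ 0 by omega)] at hζn
  have hmulinv : ζ * ζ⁻¹ = 1 := mul_inv_cancel₀ hζ0
  have hpow : ∀ k : ℕ, ζ ^ k * ζ⁻¹ ^ k = 1 := fun k => by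
    rw [← mul_pow, hmulinv, one_pow]
  have heq1 : (1 + ζ) * (1 + ζ⁻¹) = 2 + ζ + ζ⁻¹ := by linear_combination hmulinv
  set R := Algebra.adjoin ℤ ({ζ + ζ⁻¹, 2⁻¹} : Set ℂ) with hR
  have hcR : ζ + ζ⁻¹ ∈ R := Algebra.subset_adjoin (Or.inl rfl)
  have h2iR : (2:ℂ)⁻¹ ∈ R := Algebra.subset_adjoin (Or.inr rfl)
  have h2R : (2:ℂ) ∈ R := by
    rw [show (2:ℂ) = 1 + 1 by norm_num]
    exact add_mem (one_mem R) (one_mem R)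
  have hmem : (1 + ζ) * (1 + ζ⁻¹) ∈ R := by
    rw [heq1, show (2:ℂ) + ζ + ζ⁻¹ = 2 + (ζ + ζ⁻¹) by ring]
    exact add_mem h2R hcR
  -- the telescoping sequence for the inverse
  have hinvmem : ((1 + ζ) * (1 + ζ⁻¹))⁻¹ ∈ R := by
    set g : ℕ → ℂ := fun j => ζ ^ (2 ^ j) + (ζ ^ (2 ^ j))⁻¹ with hg
    have hg0 : g 0 = ζ + ζ⁻¹ := by simp [hg]
    have hgstep : ∀ j, g (j + 1) = (g j) ^ 2 - 2 := by
      intro j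
      have ha : ζ ^ (2 ^ j) ≠ 0 := pow_ne_zero _ hζ0
      have hp : ζ ^ (2 ^ (j + 1)) = (ζ ^ (2 ^ j)) ^ 2 := by
        rw [← pow_mul, pow_succ]
      simp only [hg, hp]
      field_simp
      ring
    have hgmem : ∀ j, g j ∈ R := by
      intro j
      induction j with
      | zero => rw [hg0]; exact hcR
      | succ j ih =>
        rw [hgstep j]
        exact sub_mem (pow_mem ih 2) h2R
    have htel : ∀ m, (2 + g 0) * ((g 0 - 2) * ∏ j ∈ Finset.range m, (g (j + 1) + 2))
        = g (m + 1) - 2 := by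
      intro m
      induction m with
      | zero => simp; linear_combination hgstep 0 + 4 * hmulinv
      | succ m ih =>
        rw [Finset.prod_range_succ]
        linear_combination (g (m + 1) + 2) * ih + hgstep (m + 1) + 4 * hpow (2 ^ (m + 1))
    have hghalf : g (s - 1) = -2 := by
      have hsplit : n = 2 ^ (s - 1) * 2 := by
        rw [hn, ← pow_succ, show s - 1 + 1 = s by omega]
      have h2pow : 2 ^ (s - 1) = n / 2 := by omega
      have hhalf : ζ ^ (n / 2) = -1 := by
        have hsq : (ζ ^ (n / 2)) ^ 2 = 1 := by
          rw [← pow_mul, show n / 2 * 2 = n by omega, hζn]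
        have hne1 : ζ ^ (n / 2) ≠ 1 := by
          intro h
          have hdvd := hζ.dvd_of_pow_eq_one _ h
          have := Nat.le_of_dvd (by omega) hdvd
          omega
        have hz : (ζ ^ (n / 2) - 1) * (ζ ^ (n / 2) + 1) = 0 := by linear_combination hsq
        rcases mul_eq_zero.mp hz with h | h
        · exact absurd (by linear_combination h) hne1
        · linear_combination h
      simp only [hg, h2pow, hhalf]
      norm_num
    have hkey : (2 + g 0) * ((g 0 - 2) * ∏ j ∈ Finset.range (s - 2), (g (j + 1) + 2)) = -4 := by
      have h := htel (s - 2)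
      rw [show s - 2 + 1 = s - 1 by omega, hghalf] at h
      rw [h]
      norm_num
    set X := (g 0 - 2) * ∏ j ∈ Finset.range (s - 2), (g (j + 1) + 2) with hX
    have hXmem : X ∈ R := by
      refine mul_mem (sub_mem (hg0 ▸ hcR) h2R) ?_
      exact prod_mem fun j _ => add_mem (hgmem (j + 1)) h2R
    have hu' : (1 + ζ) * (1 + ζ⁻¹) = 2 + g 0 := by
      rw [hg0]
      linear_combination hmulinv
    have h2 : (2:ℂ) * 2⁻¹ = 1 := by norm_num
    have huinv : ((1 + ζ) * (1 + ζ⁻¹))⁻¹ = X * (-(2⁻¹ * 2⁻¹) : ℂ) := by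
      apply inv_eq_of_mul_eq_one_right
      linear_combination (X * (-(2⁻¹ * 2⁻¹) : ℂ)) * hu' + (-(2⁻¹ * 2⁻¹) : ℂ) * hkey
        + ((2:ℂ) * 2⁻¹ + 1) * h2
    rw [huinv]
    exact mul_mem hXmem (neg_mem (mul_mem h2iR h2iR))
  refine ⟨heq1, hmem, hinvmem, ?_⟩
  rintro ⟨w, hw, -, hwsq⟩
  haveI : NeZero n := ⟨by omega⟩
  -- construct a primitive 2n-th root μ with μ ^ 2 = ζ
  have h2n0 : 2 * n ≠ 0 := by omega
  have hμ₀ : IsPrimitiveRoot (Complex.exp (2 * Real.pi * Complex.I / (2 * n : ℕ))) (2 * n) :=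
    Complex.isPrimitiveRoot_exp (2 * n) h2n0
  set μ₀ := Complex.exp (2 * Real.pi * Complex.I / (2 * n : ℕ)) with hμ₀def
  have hμ₀sq : IsPrimitiveRoot (μ₀ ^ 2) n := hμ₀.pow (by omega) (by ring)
  obtain ⟨i, hilt, hieq⟩ := hμ₀sq.eq_pow_of_pow_eq_one hζn
  have hcop : Nat.Coprime i n := (hμ₀sq.pow_iff_coprime hn0 i).mp (hieq ▸ hζ)
  have hiodd : ¬ (2 ∣ i) := by
    intro h2i
    have h2n : (2:ℕ) ∣ n := by
      rw [hn]
      exact dvd_pow_self 2 (by omega)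
    have := Nat.dvd_gcd h2i h2n
    rw [Nat.Coprime] at hcop
    omega
  have hcop2 : Nat.Coprime i (2 * n) := by
    refine Nat.Coprime.mul_right ?_ hcop
    exact ((Nat.Prime.coprime_iff_not_dvd Nat.prime_two).mpr hiodd).symm
  set μ := μ₀ ^ i with hμdef
  have hμ : IsPrimitiveRoot μ (2 * n) := (hμ₀.pow_iff_coprime (by omega) i).mpr hcop2
  have hμsq : μ ^ 2 = ζ := by
    rw [hμdef, ← pow_mul, mul_comm i 2, pow_mul]
    exact hieq
  have hμ0 : μ ≠ 0 := by
    intro h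
    have := hμ.pow_eq_one
    simp [h, zero_pow h2n0] at this
  -- the ambient field L = ℚ(μ)
  have hμint : IsIntegral ℚ μ := (hμ.isIntegral (by omega)).tower_top
  set L : IntermediateField ℚ ℂ := ℚ⟮μ⟯ with hLdef
  haveI : FiniteDimensional ℚ ↥L := IntermediateField.adjoin.finiteDimensional hμint
  set m : L := IntermediateField.AdjoinSimple.gen ℚ μ with hmdef
  have hmcoe : (m : ℂ) = μ := rfl
  have hm0 : m ≠ 0 := by
    intro h
    apply hμ0
    rw [← hmcoe, h]
    rfl
  set z : L := m ^ 2 with hzdef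
  have hzcoe : (z : ℂ) = ζ := by
    rw [hzdef]
    push_cast [hmcoe]
    exact hμsq
  set tL : L := m + m⁻¹ with htLdef
  set cL : L := z + z⁻¹ with hcLdef
  have hinvcoe : ∀ x : L, ((x⁻¹ : L) : ℂ) = (x : ℂ)⁻¹ := fun x => by
    rw [← IntermediateField.coe_val]
    exact map_inv₀ L.val x
  have htcoe : (tL : ℂ) = μ + μ⁻¹ := by
    push_cast [htLdef, hinvcoe m, hmcoe]
    ring
  have hccoe : (cL : ℂ) = ζ + ζ⁻¹ := by
    push_cast [hcLdef, hinvcoe z, hzcoe]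
    ring
  -- the element w lies in ℚ(ζ + ζ⁻¹)
  have hRle : R ≤ Subalgebra.restrictScalars ℤ (ℚ⟮ζ + ζ⁻¹⟯ : IntermediateField ℚ ℂ).toSubalgebra := by
    rw [hR]
    apply Algebra.adjoin_le
    rintro x (rfl | rfl)
    · show ζ + ζ⁻¹ ∈ (ℚ⟮ζ + ζ⁻¹⟯ : IntermediateField ℚ ℂ)
      exact IntermediateField.mem_adjoin_simple_self ℚ _
    · show (2:ℂ)⁻¹ ∈ (ℚ⟮ζ + ζ⁻¹⟯ : IntermediateField ℚ ℂ)
      refine inv_mem ?_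
      rw [show (2:ℂ) = 1 + 1 by norm_num]
      exact add_mem (one_mem _) (one_mem _)
  have hwC : w ∈ (ℚ⟮ζ + ζ⁻¹⟯ : IntermediateField ℚ ℂ) := hRle hw
  -- w = ± (μ + μ⁻¹)
  have hμmulinv : μ * μ⁻¹ = 1 := mul_inv_cancel₀ hμ0
  have hζinv : ζ⁻¹ = (μ⁻¹) ^ 2 := by
    rw [← hμsq, inv_pow]
  have htsq : (μ + μ⁻¹) ^ 2 = (1 + ζ) * (1 + ζ⁻¹) := by
    rw [heq1, ← hμsq, ← inv_pow]
    linear_combination 2 * hμmulinv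
  have hfactor : (w - (μ + μ⁻¹)) * (w + (μ + μ⁻¹)) = 0 := by
    linear_combination hwsq - htsq
  have htC : (μ + μ⁻¹) ∈ (ℚ⟮ζ + ζ⁻¹⟯ : IntermediateField ℚ ℂ) := by
    rcases mul_eq_zero.mp hfactor with h | h
    · rw [show μ + μ⁻¹ = w by linear_combination -h]
      exact hwC
    · rw [show μ + μ⁻¹ = -w by linear_combination h]
      exact neg_mem hwC
  -- intermediate fields
  have hliftc : IntermediateField.lift (ℚ⟮cL⟯ : IntermediateField ℚ ↥L) = (ℚ⟮ζ + ζ⁻¹⟯ : IntermediateField ℚ ℂ) := by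
    erw [IntermediateField.lift_adjoin_simple, hccoe]
  have htLEc : tL ∈ (ℚ⟮cL⟯ : IntermediateField ℚ ↥L) := by
    apply (IntermediateField.mem_lift tL).mp
    rw [hliftc, htcoe]
    exact htC
  have hEtEc : (ℚ⟮tL⟯ : IntermediateField ℚ ↥L) ≤ (ℚ⟮cL⟯ : IntermediateField ℚ ↥L) := IntermediateField.adjoin_simple_le_iff.mpr htLEc
  have hEcEz : (ℚ⟮cL⟯ : IntermediateField ℚ ↥L) ≤ (ℚ⟮z⟯ : IntermediateField ℚ ↥L) := by
    apply IntermediateField.adjoin_simple_le_iff.mpr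
    exact add_mem (IntermediateField.mem_adjoin_simple_self ℚ z)
      (inv_mem (IntermediateField.mem_adjoin_simple_self ℚ z))
  -- degrees
  have hzprim : IsPrimitiveRoot z n := by
    refine IsPrimitiveRoot.of_map_of_injective (f := L.val) ?_ Subtype.val_injective
    rw [show L.val z = ζ from hzcoe]
    exact hζ
  have htot2n : Nat.totient (2 * n) = 2 ^ s := by
    rw [hn, show 2 * 2 ^ s = 2 ^ (s + 1) by ring, Nat.totient_prime_pow Nat.prime_two (by omega)]
    simp
  have htotn : Nat.totient n = 2 ^ (s - 1) := by
    rw [hn, Nat.totient_prime_pow Nat.prime_two (by omega)]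
    simp
  have hrankL : Module.finrank ℚ ↥L = 2 ^ s := by
    rw [hLdef, finrank_adjoin_primitive_root (by omega) hμ, htot2n]
  have hrankEz : Module.finrank ℚ ↥(ℚ⟮z⟯ : IntermediateField ℚ ↥L) = 2 ^ (s - 1) := by
    rw [finrank_adjoin_primitive_root hn0 hzprim, htotn]
  -- [L : Et] ≤ 2
  have hLt2 : Module.finrank ℚ ↥L ≤ 2 * Module.finrank ℚ ↥(ℚ⟮tL⟯ : IntermediateField ℚ ↥L) := by
    have htop : (ℚ⟮m⟯ : IntermediateField ℚ ↥L) = ⊤ := by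
      apply IntermediateField.lift_injective
      erw [IntermediateField.lift_adjoin_simple, hmcoe, IntermediateField.lift_top]
    have hEtm : IntermediateField.adjoin ↥(ℚ⟮tL⟯ : IntermediateField ℚ ↥L) ({m} : Set ↥L) = ⊤ := by
      apply IntermediateField.restrictScalars_injective ℚ
      rw [IntermediateField.restrictScalars_top, eq_top_iff, ← htop]
      apply IntermediateField.adjoin_le_iff.mpr
      intro x hx
      rw [Set.mem_singleton_iff] at hx
      subst hx
      exact IntermediateField.subset_adjoin ↥(ℚ⟮tL⟯ : IntermediateField ℚ ↥L) {m} rfl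
    haveI : FiniteDimensional ↥(ℚ⟮tL⟯ : IntermediateField ℚ ↥L) ↥L := FiniteDimensional.right ℚ ↥(ℚ⟮tL⟯ : IntermediateField ℚ ↥L) ↥L
    have hint : IsIntegral ↥(ℚ⟮tL⟯ : IntermediateField ℚ ↥L) m := IsIntegral.of_finite ↥(ℚ⟮tL⟯ : IntermediateField ℚ ↥L) m
    set tE : ↥(ℚ⟮tL⟯ : IntermediateField ℚ ↥L) := ⟨tL, IntermediateField.mem_adjoin_simple_self ℚ tL⟩ with htE
    have hminpoly : minpoly ↥(ℚ⟮tL⟯ : IntermediateField ℚ ↥L) m ∣ (X ^ 2 - C tE * X + 1 : Polynomial ↥(ℚ⟮tL⟯ : IntermediateField ℚ ↥L)) := by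
      apply minpoly.dvd
      have halg : algebraMap ↥(ℚ⟮tL⟯ : IntermediateField ℚ ↥L) ↥L tE = tL := rfl
      simp only [map_add, map_sub, map_mul, map_pow, map_one, aeval_X, aeval_C, aeval_one, halg]
      have hmm : m * m⁻¹ = 1 := mul_inv_cancel₀ hm0
      rw [htLdef]
      linear_combination -hmm
    have hPne : (X ^ 2 - C tE * X + 1 : Polynomial ↥(ℚ⟮tL⟯ : IntermediateField ℚ ↥L)) ≠ 0 := by
      intro h
      have := congrArg (Polynomial.coeff · 2) h
      simp [Polynomial.coeff_one] at this
    have hdeg2 : (X ^ 2 - C tE * X + 1 : Polynomial ↥(ℚ⟮tL⟯ : IntermediateField ℚ ↥L)).natDegree ≤ 2 := by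
      compute_degree
    have hfr : Module.finrank ↥(ℚ⟮tL⟯ : IntermediateField ℚ ↥L) ↥L ≤ 2 := by
      have hadj := IntermediateField.adjoin.finrank hint
      rw [hEtm, IntermediateField.finrank_top'] at hadj
      rw [hadj]
      exact le_trans (Polynomial.natDegree_le_of_dvd hminpoly hPne) hdeg2
    calc Module.finrank ℚ ↥L = Module.finrank ℚ ↥(ℚ⟮tL⟯ : IntermediateField ℚ ↥L) * Module.finrank ↥(ℚ⟮tL⟯ : IntermediateField ℚ ↥L) ↥L :=
          (Module.finrank_mul_finrank ℚ ↥(ℚ⟮tL⟯ : IntermediateField ℚ ↥L) ↥L).symm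
      _ ≤ Module.finrank ℚ ↥(ℚ⟮tL⟯ : IntermediateField ℚ ↥L) * 2 := Nat.mul_le_mul_left _ hfr
      _ = 2 * Module.finrank ℚ ↥(ℚ⟮tL⟯ : IntermediateField ℚ ↥L) := by ring
  -- put everything together
  haveI hfdEc : FiniteDimensional ℚ ↥(ℚ⟮cL⟯ : IntermediateField ℚ ↥L) :=
    IntermediateField.adjoin.finiteDimensional (IsIntegral.of_finite ℚ cL)
  have hAC : Module.finrank ℚ ↥(ℚ⟮tL⟯ : IntermediateField ℚ ↥L) ≤ Module.finrank ℚ ↥(ℚ⟮cL⟯ : IntermediateField ℚ ↥L) :=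
    Nat.le_of_dvd Module.finrank_pos
      (dvd_of_mul_right_eq _ (IntermediateField.finrank_bot_mul_relfinrank hEtEc))
  have hCD : Module.finrank ℚ ↥(ℚ⟮cL⟯ : IntermediateField ℚ ↥L) ∣ Module.finrank ℚ ↥(ℚ⟮z⟯ : IntermediateField ℚ ↥L) :=
    dvd_of_mul_right_eq _ (IntermediateField.finrank_bot_mul_relfinrank hEcEz)
  have hCpos : 0 < Module.finrank ℚ ↥(ℚ⟮z⟯ : IntermediateField ℚ ↥L) := by
    rw [hrankEz]
    positivity
  have hCeq : Module.finrank ℚ ↥(ℚ⟮cL⟯ : IntermediateField ℚ ↥L) = Module.finrank ℚ ↥(ℚ⟮z⟯ : IntermediateField ℚ ↥L) := by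
    have hle : Module.finrank ℚ ↥(ℚ⟮cL⟯ : IntermediateField ℚ ↥L) ≤ Module.finrank ℚ ↥(ℚ⟮z⟯ : IntermediateField ℚ ↥L) := Nat.le_of_dvd hCpos hCD
    have hge : Module.finrank ℚ ↥(ℚ⟮z⟯ : IntermediateField ℚ ↥L) ≤ Module.finrank ℚ ↥(ℚ⟮cL⟯ : IntermediateField ℚ ↥L) := by
      rw [hrankEz]
      have hps : 2 ^ s = 2 * 2 ^ (s - 1) := by
        rw [← pow_succ', show s - 1 + 1 = s by omega]
      have h1 : 2 ^ s ≤ 2 * Module.finrank ℚ ↥(ℚ⟮tL⟯ : IntermediateField ℚ ↥L) := hrankL ▸ hLt2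
      omega
    omega
  haveI : FiniteDimensional ℚ ↥(ℚ⟮z⟯ : IntermediateField ℚ ↥L) := by
    apply IntermediateField.adjoin.finiteDimensional
    exact (hzprim.isIntegral hn0).tower_top
  have hEcez : (ℚ⟮cL⟯ : IntermediateField ℚ ↥L) = (ℚ⟮z⟯ : IntermediateField ℚ ↥L) := IntermediateField.eq_of_le_of_finrank_eq hEcEz hCeq
  -- hence ζ would be real
  have hzEc : z ∈ (ℚ⟮cL⟯ : IntermediateField ℚ ↥L) := hEcez ▸ IntermediateField.mem_adjoin_simple_self ℚ z
  have hζreal : ∃ r : ℝ, ζ = (r : ℂ) := by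
    have hζC : ζ ∈ (ℚ⟮ζ + ζ⁻¹⟯ : IntermediateField ℚ ℂ) := by
      rw [← hliftc]
      exact ⟨z, hzEc, hzcoe⟩
    -- ℚ(ζ+ζ⁻¹) consists of real numbers
    have hnorm : ‖ζ‖ = 1 := Complex.norm_eq_one_of_pow_eq_one hζn (by omega)
    have hconj : (starRingEnd ℂ) (ζ + ζ⁻¹) = ζ + ζ⁻¹ := by
      rw [map_add, ← Complex.inv_eq_conj hnorm, map_inv₀, ← Complex.inv_eq_conj hnorm, inv_inv]
      ring
    have hcreal : ∃ r : ℝ, ζ + ζ⁻¹ = (r : ℂ) := Complex.conj_eq_iff_real.mp hconj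
    obtain ⟨r, hr⟩ := hcreal
    set realIF : IntermediateField ℚ ℂ := Subfield.toIntermediateField
      Complex.ofRealHom.fieldRange (fun x => ⟨(x : ℝ), by push_cast; rfl⟩) with hrif
    have hle : (ℚ⟮ζ + ζ⁻¹⟯ : IntermediateField ℚ ℂ) ≤ realIF := by
      apply IntermediateField.adjoin_le_iff.mpr
      intro x hx
      rcases hx with rfl
      exact ⟨r, hr.symm⟩
    obtain ⟨r', hr'⟩ := hle hζC
    exact ⟨r', hr'.symm⟩
  obtain ⟨r, hr⟩ := hζreal
  -- a real root of unity has order ≤ 2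
  have hconjζ : (starRingEnd ℂ) ζ = ζ := by
    rw [hr, Complex.conj_ofReal]
  have hnorm : ‖ζ‖ = 1 := Complex.norm_eq_one_of_pow_eq_one hζn (by omega)
  have hζζ : ζ = ζ⁻¹ := by
    rw [Complex.inv_eq_conj hnorm, hconjζ]
  have hζsq : ζ ^ 2 = 1 := by
    rw [pow_two]
    nth_rewrite 2 [hζζ]
    exact hmulinv
  have hdvd := hζ.dvd_of_pow_eq_one 2 hζsq
  have := Nat.le_of_dvd (by norm_num) hdvd
  omega
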